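/- Let G be a finite 2-group of order at least 4, U a normal subgroup of order 2 with [G,G] ⊆ U, and suppose the number of cyclic subgroups V of G with U ≤ V and (V:U) = 2 is odd. Then G is cyclic or G is a nonabelian group of order 8. -/

import Mathlib

open Finset

namespace ArtinAux9

lemma zmod2_cases (x : ZMod 2) : x = 0 ∨ x = 1 := by revert x; decide

lemma sum_eq_count {ι : Type*} [Fintype ι] (f : ι → ZMod 2) :
    ∑ i, f i = ((univ.filter fun i => f i = 1).card : ZMod 2) := by
  classical
  rw [← Finset.sum_filter_add_sum_filter_not univ (fun i => f i = 1) f]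
  have h1 : ∑ i ∈ univ.filter (fun i => f i = 1), f i
      = ((univ.filter fun i => f i = 1).card : ZMod 2) := by
    rw [Finset.sum_congr rfl (fun i hi => (Finset.mem_filter.mp hi).2)]
    simp [Finset.sum_const, nsmul_eq_mul]
  have h2 : ∑ i ∈ univ.filter (fun i => ¬ (f i = 1)), f i = 0 := by
    apply Finset.sum_eq_zero
    intro i hi
    rcases zmod2_cases (f i) with h | h
    · exact h
    · exact absurd h (Finset.mem_filter.mp hi).2
  rw [h1, h2, add_zero]

lemma hom_count {H : Type*} [Group H] [Fintype H] (φ : H → ZMod 2)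
    (hφ : ∀ a b, φ (a * b) = φ a + φ b) :
    (univ.filter fun h => φ h = 1).card = 0 ∨
      2 * (univ.filter fun h => φ h = 1).card = Fintype.card H := by
  classical
  have hone : φ 1 = 0 := by
    have := hφ 1 1; rw [mul_one] at this
    rcases zmod2_cases (φ 1) with h | h
    · exact h
    · rw [h] at this; exact absurd this (by decide)
  by_cases hz : ∀ h, φ h ≠ 1
  · left
    rw [Finset.card_eq_zero, Finset.filter_eq_empty_iff]
    exact fun _ _ => hz _
  · right
    push_neg at hz
    obtain ⟨h₀, h0⟩ := hz
    have hinv : φ h₀⁻¹ = 1 := by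
      have := hφ h₀ h₀⁻¹
      rw [mul_inv_cancel, hone, h0] at this
      rcases zmod2_cases (φ h₀⁻¹) with h | h
      · rw [h, add_zero] at this; exact absurd this.symm (by decide)
      · exact h
    have key : (univ.filter fun h => φ h = 1).card
        = (univ.filter fun h => ¬ (φ h = 1)).card := by
      apply Finset.card_bij' (fun h _ => h₀ * h) (fun h _ => h₀⁻¹ * h)
      · intro a ha
        simp only [Finset.mem_filter, Finset.mem_univ, true_and] at ha ⊢
        rw [hφ, h0, ha]; decide
      · intro a ha
        simp only [Finset.mem_filter, Finset.mem_univ, true_and] at ha ⊢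
        rcases zmod2_cases (φ a) with h | h
        · rw [hφ, hinv, h, add_zero]
        · exact absurd h ha
      · intro a _; rw [← mul_assoc, inv_mul_cancel, one_mul]
      · intro a _; rw [← mul_assoc, mul_inv_cancel, one_mul]
    have := Finset.card_filter_add_card_filter_not (s := univ)
      (p := fun h : H => φ h = 1)
    rw [← key] at this
    rw [← Finset.card_univ, ← this]; ring

lemma hom_sum {H : Type*} [Group H] [Fintype H] (φ : H → ZMod 2)
    (hφ : ∀ a b, φ (a * b) = φ a + φ b) (h4 : 4 ∣ Fintype.card H) :
    ∑ h, φ h = 0 := by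
  classical
  rw [sum_eq_count]
  rcases hom_count φ hφ with h | h
  · rw [h]; simp
  · obtain ⟨m, hm⟩ : 2 ∣ (univ.filter fun h => φ h = 1).card := by omega
    rw [hm]
    push_cast
    rw [show ((2:ZMod 2)) = 0 by decide, zero_mul]


lemma quad_count {E : Type*} [Group E] [Fintype E] (ε : E → ZMod 2) (β : E → E → ZMod 2)
    (hmul : ∀ a c, ε (a * c) = ε a + ε c + β a c)
    (hβ : ∀ a a' c, β (a * a') c = β a c + β a' c)
    {d : ℕ} (hcard : Fintype.card E = 2 ^ d) (hd : 3 ≤ d) :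
    ((univ.filter fun a => ε a = 1).card : ZMod 2) = 0 := by
  classical
  haveI : Fact (Nat.Prime 2) := ⟨Nat.prime_two⟩
  have hdvd : (2:ℕ) ^ (d - 1) ∣ Nat.card E := by
    rw [Nat.card_eq_fintype_card, hcard]
    exact pow_dvd_pow 2 (by omega)
  obtain ⟨H, hH⟩ := Sylow.exists_subgroup_card_pow_prime 2 hdvd
  have hHcard : Fintype.card ↥H = 2 ^ (d - 1) := by
    rw [← Nat.card_eq_fintype_card]; exact hH
  -- pick w ∉ H
  have hne : ∃ w : E, w ∉ H := by
    by_contra hw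
    push_neg at hw
    have : H = ⊤ := (Subgroup.eq_top_iff' H).mpr hw
    rw [this] at hH
    rw [Subgroup.card_top, Nat.card_eq_fintype_card, hcard] at hH
    have := Nat.pow_right_injective (le_refl 2) hH
    omega
  obtain ⟨w, hw⟩ := hne
  set HF : Finset E := univ.filter (· ∈ H) with hHF
  have hHFcard : HF.card = 2 ^ (d - 1) := by
    rw [hHF, ← Fintype.card_subtype, ← hHcard]
  have hinj : Function.Injective (· * w) := fun a b h => by
    simpa using mul_right_cancel (h : a * w = b * w)
  have hdisj : Disjoint HF (HF.image (· * w)) := by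
    rw [Finset.disjoint_left]
    intro a ha hb
    obtain ⟨h, hh, rfl⟩ := Finset.mem_image.mp hb
    rw [hHF] at ha hh
    simp only [Finset.mem_filter, Finset.mem_univ, true_and] at ha hh
    exact hw (by simpa using H.mul_mem (H.inv_mem hh) ha)
  have huniv : HF ∪ HF.image (· * w) = univ := by
    apply Finset.eq_univ_of_card
    rw [Finset.card_union_of_disjoint hdisj, Finset.card_image_of_injective _ hinj,
      hHFcard, hcard]
    have hde : d - 1 + 1 = d := by omega
    calc 2 ^ (d-1) + 2 ^ (d-1) = 2 ^ (d-1) * 2 := by ring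
      _ = 2 ^ (d-1+1) := (pow_succ 2 (d-1)).symm
      _ = 2 ^ d := by rw [hde]
  -- sum computation
  rw [← sum_eq_count ε, ← huniv, Finset.sum_union hdisj,
    Finset.sum_image (fun a _ b _ h => hinj h)]
  have hsum2 : ∑ a ∈ HF, ε (a * w) = ∑ a ∈ HF, ε a + (HF.card : ZMod 2) * ε w
      + ∑ a ∈ HF, β a w := by
    rw [Finset.sum_congr rfl (fun a _ => hmul a w), Finset.sum_add_distrib,
      Finset.sum_add_distrib, Finset.sum_const, nsmul_eq_mul]
  rw [hsum2]
  have hc2 : (HF.card : ZMod 2) = 0 := by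
    rw [hHFcard]
    have : (2:ℕ) ∣ 2 ^ (d-1) := dvd_pow_self 2 (by omega)
    obtain ⟨m, hm⟩ := this
    rw [hm, Nat.cast_mul, ZMod.natCast_self, zero_mul]
  have hβsum : ∑ a ∈ HF, β a w = 0 := by
    have hsub : ∑ a ∈ HF, β a w = ∑ a : ↥H, β (↑a) w := by
      apply Finset.sum_subtype
      intro x; rw [hHF]; simp
    rw [hsub]
    apply hom_sum (fun a : ↥H => β (↑a) w)
    · intro a b; exact hβ _ _ _
    · rw [hHcard]
      have : (4:ℕ) = 2 ^ 2 := rfl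
      rw [this]
      exact pow_dvd_pow 2 (by omega)
  rw [hβsum, hc2, zero_mul, add_zero, add_zero]
  exact CharTwo.add_self_eq_zero _

lemma cyclic_of_few_involutions {A : Type*} [Group A] [Fintype A] [DecidableEq A]
    (hc : ∀ x y : A, x * y = y * x)
    (h2 : ∀ a : A, ∃ k : ℕ, orderOf a = 2 ^ k)
    (hsq : (univ.filter fun a : A => a ^ 2 = 1).card ≤ 2) : IsCyclic A := by
  apply isCyclic_of_card_pow_eq_one_le
  intro n hn
  have key : ∀ k : ℕ, (univ.filter fun a : A => a ^ (2 ^ k) = 1).card ≤ 2 ^ k := by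
    intro k
    induction k with
    | zero =>
      simp only [pow_zero, pow_one]
      have : (univ.filter fun a : A => a = 1) ⊆ {1} := by
        intro a ha; simp only [Finset.mem_filter] at ha; simp [ha.2]
      calc (univ.filter fun a : A => a = 1).card ≤ ({1} : Finset A).card :=
            Finset.card_le_card this
        _ = 1 := Finset.card_singleton _
    | succ k ih =>
      set s := univ.filter fun a : A => a ^ (2 ^ (k+1)) = 1 with hs
      have himg : s.image (fun a => a ^ 2) ⊆ univ.filter fun a : A => a ^ (2 ^ k) = 1 := by
        intro b hb
        obtain ⟨a, ha, rfl⟩ := Finset.mem_image.mp hb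
        rw [hs] at ha
        simp only [Finset.mem_filter, Finset.mem_univ, true_and] at ha ⊢
        rw [← pow_mul, mul_comm 2 (2^k), ← pow_succ]
        exact ha
      have hfib : s.card ≤ 2 * (s.image (fun a => a ^ 2)).card := by
        apply Finset.card_le_mul_card_image
        intro b hb
        obtain ⟨a₀, ha₀s, ha₀⟩ := Finset.mem_image.mp hb
        have : (s.filter fun a => a ^ 2 = b) ⊆
            (univ.filter fun a : A => a ^ 2 = 1).image (fun a => a * a₀) := by
          intro a ha
          simp only [Finset.mem_filter] at ha
          apply Finset.mem_image.mpr
          refine ⟨a * a₀⁻¹, ?_, by group⟩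
          simp only [Finset.mem_filter, Finset.mem_univ, true_and]
          rw [(show Commute a a₀⁻¹ from hc a a₀⁻¹).mul_pow, ha.2, inv_pow, ha₀,
            mul_inv_cancel]
        calc (s.filter fun a => a ^ 2 = b).card
            ≤ ((univ.filter fun a : A => a ^ 2 = 1).image (fun a => a * a₀)).card :=
              Finset.card_le_card this
          _ ≤ (univ.filter fun a : A => a ^ 2 = 1).card := Finset.card_image_le
          _ ≤ 2 := hsq
      calc s.card ≤ 2 * (s.image (fun a => a ^ 2)).card := hfib
        _ ≤ 2 * (univ.filter fun a : A => a ^ (2 ^ k) = 1).card :=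
            Nat.mul_le_mul_left 2 (Finset.card_le_card himg)
        _ ≤ 2 * 2 ^ k := Nat.mul_le_mul_left 2 ih
        _ = 2 ^ (k+1) := by ring
  set v := (n.factorization) 2 with hv
  have hsubset : (univ.filter fun a : A => a ^ n = 1)
      ⊆ univ.filter fun a : A => a ^ (2 ^ v) = 1 := by
    intro a ha
    simp only [Finset.mem_filter, Finset.mem_univ, true_and] at ha ⊢
    obtain ⟨k, hk⟩ := h2 a
    have hdvd : orderOf a ∣ n := orderOf_dvd_of_pow_eq_one ha
    rw [hk] at hdvd
    have hkv : k ≤ v := by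
      rw [hv]
      exact (Nat.Prime.pow_dvd_iff_le_factorization Nat.prime_two (by omega)).mp hdvd
    apply orderOf_dvd_iff_pow_eq_one.mp
    rw [hk]
    exact pow_dvd_pow 2 hkv
  calc (univ.filter fun a : A => a ^ n = 1).card
      ≤ (univ.filter fun a : A => a ^ (2 ^ v) = 1).card := Finset.card_le_card hsubset
    _ ≤ 2 ^ v := key v
    _ ≤ n := Nat.ordProj_le 2 (by omega)


end ArtinAux9
open Finset Subgroup
open scoped commutatorElement
namespace ArtinMid9

variable {G : Type*} [Group G]

-- central element rearrangement lemmas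
lemma I1 {z x : G} (hz : ∀ g, g * z = z * g) : (x*z)*(x*z) = x*x*(z*z) := by
  calc (x*z)*(x*z) = x*(z*x)*z := by group
    _ = x*(x*z)*z := by rw [← hz x]
    _ = x*x*(z*z) := by group

lemma I2 {z : G} (hz : ∀ g, g * z = z * g) (x y : G) : ⁅x*z, y⁆ = ⁅x,y⁆ := by
  calc ⁅x*z,y⁆ = x*(z*y)*z⁻¹*x⁻¹*y⁻¹ := by group
    _ = x*(y*z)*z⁻¹*x⁻¹*y⁻¹ := by rw [← hz y]
    _ = ⁅x,y⁆ := by group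

lemma I3 {z : G} (hz : ∀ g, g * z = z * g) (x y : G) : ⁅x, y*z⁆ = ⁅x,y⁆ := by
  calc ⁅x,y*z⁆ = x*y*(z*x⁻¹)*z⁻¹*y⁻¹ := by group
    _ = x*y*(x⁻¹*z)*z⁻¹*y⁻¹ := by rw [← hz x⁻¹]
    _ = ⁅x,y⁆ := by group

lemma I4 {x y : G} (hz : ∀ g, g * ⁅y,x⁆ = ⁅y,x⁆ * g) :
    (x*y)*(x*y) = (x*x)*(y*y)*⁅y,x⁆ := by
  calc (x*y)*(x*y) = x*(⁅y,x⁆*(x*(y*y))) := by group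
    _ = x*((x*(y*y))*⁅y,x⁆) := by rw [← hz (x*(y*y))]
    _ = (x*x)*(y*y)*⁅y,x⁆ := by group

lemma I5 {x' y : G} (hz : ∀ g, g * ⁅x',y⁆ = ⁅x',y⁆ * g) (x : G) :
    ⁅x*x', y⁆ = ⁅x,y⁆*⁅x',y⁆ := by
  calc ⁅x*x',y⁆ = x*(⁅x',y⁆*(y*(x⁻¹*y⁻¹))) := by group
    _ = x*((y*(x⁻¹*y⁻¹))*⁅x',y⁆) := by rw [← hz (y*(x⁻¹*y⁻¹))]
    _ = ⁅x,y⁆*⁅x',y⁆ := by group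

lemma I6 {v : G} (hz : ∀ g, g * v = v * g) (p q w : G) :
    (p*v)*(q*w) = (p*q)*(v*w) := by
  calc (p*v)*(q*w) = p*(v*q)*w := by group
    _ = p*(q*v)*w := by rw [← hz q]
    _ = (p*q)*(v*w) := by group

variable {U : Subgroup G}

def sqQ (hgood : ∀ v ∈ U, v * v = 1 ∧ ∀ g : G, g * v = v * g) : G ⧸ U → G :=
  fun q => Quotient.liftOn' q (fun x => x * x) (by
    intro a b hab
    have hv : a⁻¹ * b ∈ U := QuotientGroup.leftRel_apply.mp hab
    have hb : b = a * (a⁻¹ * b) := by group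
    show a * a = b * b
    rw [hb, I1 (hgood _ hv).2, (hgood _ hv).1, mul_one])

@[simp] lemma sqQ_mk (hgood : ∀ v ∈ U, v * v = 1 ∧ ∀ g : G, g * v = v * g) (x : G) :
    sqQ hgood (x : G ⧸ U) = x * x := rfl

def bQ (hgood : ∀ v ∈ U, v * v = 1 ∧ ∀ g : G, g * v = v * g) :
    G ⧸ U → G ⧸ U → G :=
  fun q r => Quotient.liftOn₂' q r (fun x y => ⁅x, y⁆) (by
    intro a b a' b' ha hb
    have hva : a⁻¹ * a' ∈ U := QuotientGroup.leftRel_apply.mp ha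
    have hvb : b⁻¹ * b' ∈ U := QuotientGroup.leftRel_apply.mp hb
    have ha' : a' = a * (a⁻¹ * a') := by group
    have hb' : b' = b * (b⁻¹ * b') := by group
    show ⁅a, b⁆ = ⁅a', b'⁆
    rw [ha', hb', I2 (hgood _ hva).2, I3 (hgood _ hvb).2])

@[simp] lemma bQ_mk (hgood : ∀ v ∈ U, v * v = 1 ∧ ∀ g : G, g * v = v * g) (x y : G) :
    bQ hgood (x : G ⧸ U) (y : G ⧸ U) = ⁅x, y⁆ := rfl


section Props
variable [U.Normal] (hgood : ∀ v ∈ U, v * v = 1 ∧ ∀ g : G, g * v = v * g)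
  (hcm : ∀ x y : G, ⁅x, y⁆ ∈ U)

include hgood hcm

lemma bQ_mem (a c : G ⧸ U) : bQ hgood a c ∈ U := by
  induction a using QuotientGroup.induction_on
  induction c using QuotientGroup.induction_on
  rw [bQ_mk]
  exact hcm _ _

lemma sqQ_mul (a c : G ⧸ U) :
    sqQ hgood (a * c) = sqQ hgood a * sqQ hgood c * bQ hgood c a := by
  induction a using QuotientGroup.induction_on with | _ x =>
  induction c using QuotientGroup.induction_on with | _ y =>
  rw [← QuotientGroup.mk_mul, sqQ_mk, sqQ_mk, sqQ_mk, bQ_mk]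
  exact I4 ((hgood _ (hcm y x)).2)

lemma bQ_add_left (a a' c : G ⧸ U) :
    bQ hgood (a * a') c = bQ hgood a c * bQ hgood a' c := by
  induction a using QuotientGroup.induction_on with | _ x =>
  induction a' using QuotientGroup.induction_on with | _ x' =>
  induction c using QuotientGroup.induction_on with | _ y =>
  rw [← QuotientGroup.mk_mul, bQ_mk, bQ_mk, bQ_mk]
  exact I5 ((hgood _ (hcm x' y)).2) x

lemma bQ_symm (a c : G ⧸ U) : bQ hgood a c = bQ hgood c a := by
  induction a using QuotientGroup.induction_on with | _ x =>
  induction c using QuotientGroup.induction_on with | _ y =>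
  rw [bQ_mk, bQ_mk]
  have h1 : ⁅x,y⁆ * ⁅y,x⁆ = 1 := by rw [← commutatorElement_inv]; group
  have h2 := (hgood _ (hcm y x)).1
  calc ⁅x,y⁆ = ⁅x,y⁆ * (⁅y,x⁆ * ⁅y,x⁆) := by rw [h2, mul_one]
    _ = (⁅x,y⁆ * ⁅y,x⁆) * ⁅y,x⁆ := by group
    _ = ⁅y,x⁆ := by rw [h1, one_mul]

omit hcm in
lemma bQ_self (a : G ⧸ U) : bQ hgood a a = 1 := by
  induction a using QuotientGroup.induction_on with | _ x =>
  rw [bQ_mk]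
  exact commutatorElement_self x

end Props
end ArtinMid9
open Finset Subgroup ArtinMid9 ArtinAux9 in
theorem artin_stmt9 {G : Type*} [Group G] [Finite G]
    (hG : IsPGroup 2 G) (hbig : 4 ∣ Nat.card G)
    (U : Subgroup G) [U.Normal] (hU : Nat.card U = 2) (hcomm : commutator G ≤ U)
    (hodd : Odd (Nat.card {V : Subgroup G | IsCyclic ↥V ∧ U ≤ V ∧ U.relIndex V = 2})) :
    IsCyclic G ∨ (¬ (∀ a b : G, a * b = b * a) ∧ Nat.card G = 8) := by
  classical
  haveI : Fact (Nat.Prime 2) := ⟨Nat.prime_two⟩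
  -- extract the generator u of U
  obtain ⟨u', hu'1, hu'uniq⟩ := (Nat.card_eq_two_iff' (1 : ↥U)).mp hU
  set u : G := ↑u' with hu_def
  have huU : u ∈ U := u'.2
  have hu1 : u ≠ 1 := by
    simp only [hu_def, ne_eq, OneMemClass.coe_eq_one]
    exact hu'1
  have h1u : (1 : G) ≠ u := Ne.symm hu1
  have hUmem : ∀ v ∈ U, v = 1 ∨ v = u := by
    intro v hv
    by_cases h : (⟨v, hv⟩ : ↥U) = 1
    · left; simpa using congrArg Subtype.val h
    · right; simpa using congrArg Subtype.val (hu'uniq ⟨v, hv⟩ h)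
  have hu2 : u * u = 1 := by
    rcases hUmem (u * u) (U.mul_mem huU huU) with h | h
    · exact h
    · exact absurd (mul_eq_right.mp h) hu1
  have hcent : ∀ v ∈ U, ∀ g : G, g * v = v * g := by
    intro v hv g
    rcases hUmem v hv with rfl | rfl
    · simp
    · have hconj : g * u * g⁻¹ ∈ U := Subgroup.Normal.conj_mem ‹U.Normal› u huU g
      rcases hUmem _ hconj with h | h
      · exfalso
        apply hu1
        have := congrArg (fun t => g⁻¹ * t * g) h
        simpa [mul_assoc] using this
      · have := congrArg (fun t => t * g) h
        simpa [mul_assoc] using this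
  have hgood : ∀ v ∈ U, v * v = 1 ∧ ∀ g : G, g * v = v * g := by
    intro v hv
    refine ⟨?_, hcent v hv⟩
    rcases hUmem v hv with rfl | rfl
    · simp
    · exact hu2
  have hcm : ∀ x y : G, ⁅x, y⁆ ∈ U := fun x y =>
    hcomm (Subgroup.commutator_mem_commutator (Subgroup.mem_top x) (Subgroup.mem_top y))
  -- the quotient is commutative
  have hQcomm : ∀ a b : G ⧸ U, a * b = b * a := by
    intro a b
    induction a using QuotientGroup.induction_on with | _ x =>
    induction b using QuotientGroup.induction_on with | _ y =>
    rw [← QuotientGroup.mk_mul, ← QuotientGroup.mk_mul]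
    apply (QuotientGroup.eq (s := U)).mpr
    have h : (x*y)⁻¹ * (y*x) = ⁅y⁻¹, x⁻¹⁆ := by group
    rw [h]; exact hcm _ _
  -- order-4 elements
  have ord4 : ∀ x : G, x * x = u → orderOf x = 4 := by
    intro x hx
    have h2 : x ^ 2 = u := by rw [pow_two]; exact hx
    have hn : ¬ x ^ 2 ^ 1 = 1 := by rw [pow_one, h2]; exact hu1
    have hf : x ^ 2 ^ 2 = 1 := by
      rw [show (2:ℕ)^2 = 2*2 from rfl, pow_mul, h2, pow_two]; exact hu2
    have := orderOf_eq_prime_pow (p := 2) (n := 1) hn hf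
    rw [this]; norm_num
  -- relindex and card
  have hrel : ∀ V : Subgroup G, U ≤ V → 2 * U.relIndex V = Nat.card V := by
    intro V hUV
    have h1 : Nat.card ↥(U.subgroupOf V) = 2 := by
      rw [Nat.card_congr (Subgroup.subgroupOfEquivOfLe hUV).toEquiv]; exact hU
    have h2 := Subgroup.card_mul_index (U.subgroupOf V)
    rw [h1] at h2
    exact h2
  -- the set T
  set T : Set (G ⧸ U) := {a | sqQ hgood a = u} with hT
  have houtsq : ∀ a : G ⧸ U, a ∈ T → a.out * a.out = u := by
    intro a ha
    have h1 : QuotientGroup.mk a.out = a := QuotientGroup.out_eq' a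
    have h2 : sqQ hgood (QuotientGroup.mk a.out) = u := by rw [h1]; exact ha
    rwa [sqQ_mk] at h2
  have hzpow_le : ∀ x : G, x * x = u → U ≤ Subgroup.zpowers x := by
    intro x hx v hv
    rcases hUmem v hv with rfl | rfl
    · exact Subgroup.one_mem _
    · refine Subgroup.mem_zpowers_iff.mpr ⟨2, ?_⟩
      rw [zpow_two]; exact hx
  have hzcard : ∀ x : G, x * x = u → Nat.card ↥(Subgroup.zpowers x) = 4 := by
    intro x hx; rw [Nat.card_zpowers]; exact ord4 x hx
  have hcycz : ∀ x : G, IsCyclic ↥(Subgroup.zpowers x) := by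
    intro x
    refine ⟨⟨⟨x, Subgroup.mem_zpowers x⟩, fun y => ?_⟩⟩
    obtain ⟨k, hk⟩ := Subgroup.mem_zpowers_iff.mp y.2
    exact Subgroup.mem_zpowers_iff.mpr ⟨k, Subtype.ext (by rw [SubgroupClass.coe_zpow]; exact hk)⟩
  have hmemTP : ∀ a : G ⧸ U, a ∈ T →
      Subgroup.zpowers a.out ∈ {V : Subgroup G | IsCyclic ↥V ∧ U ≤ V ∧ U.relIndex V = 2} := by
    intro a ha
    have hx := houtsq a ha
    refine ⟨hcycz _, hzpow_le _ hx, ?_⟩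
    have h1 := hrel _ (hzpow_le _ hx)
    rw [hzcard _ hx] at h1
    omega
  -- the bijection between T and the set of subgroups
  have hTC : Nat.card T = Nat.card {V : Subgroup G | IsCyclic ↥V ∧ U ≤ V ∧ U.relIndex V = 2} := by
    apply Nat.card_eq_of_bijective (fun a : T => (⟨Subgroup.zpowers a.1.out, hmemTP a.1 a.2⟩ :
      {V : Subgroup G | IsCyclic ↥V ∧ U ≤ V ∧ U.relIndex V = 2}))
    constructor
    · rintro ⟨a, ha⟩ ⟨b, hb⟩ hab
      have hx := houtsq a ha
      have hy := houtsq b hb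
      simp only [Subtype.mk.injEq] at hab
      have hyx : b.out ∈ Subgroup.zpowers a.out := by
        rw [hab]; exact Subgroup.mem_zpowers _
      obtain ⟨k, hk⟩ := Subgroup.mem_zpowers_iff.mp hyx
      have hord : orderOf a.out = 4 := ord4 _ hx
      have h2k : a.out ^ (k + k - 2) = 1 := by
        have e1 : a.out ^ (k + k - 2) = (a.out ^ k * a.out ^ k) * (a.out * a.out)⁻¹ := by
          rw [← zpow_add]
          rw [← zpow_two, ← zpow_neg, ← zpow_add]
          congr 1
        rw [e1, hk, hy, hx, mul_inv_cancel]
      have hdvd : ((4:ℕ):ℤ) ∣ (k + k - 2) := by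
        rw [← hord]
        exact orderOf_dvd_iff_zpow_eq_one.mpr h2k
      obtain ⟨m, hm⟩ : ∃ m : ℤ, k - 1 = 2 * m := by
        obtain ⟨m, hm⟩ := hdvd
        exact ⟨m, by push_cast at hm; omega⟩
      have hbv : a.out⁻¹ * b.out = u ^ m := by
        rw [← hk]
        have : a.out⁻¹ * a.out ^ k = a.out ^ (k - 1) := by
          rw [← zpow_neg_one, ← zpow_add]; congr 1; ring
        rw [this, hm, zpow_mul]
        congr 1
        rw [zpow_two, hx]
      apply Subtype.ext
      calc a = QuotientGroup.mk a.out := (QuotientGroup.out_eq' a).symm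
        _ = QuotientGroup.mk b.out := by
            apply (QuotientGroup.eq (s := U)).mpr
            rw [hbv]
            exact Subgroup.zpow_mem U huU m
        _ = b := QuotientGroup.out_eq' b
    · rintro ⟨V, hV⟩
      obtain ⟨hVcyc, hVle, hVrel⟩ := hV
      have hVcard : Nat.card ↥V = 4 := by
        have := hrel V hVle; omega
      haveI := hVcyc
      obtain ⟨ζ, hζ⟩ := IsCyclic.exists_generator (α := ↥V)
      set x : G := ↑ζ with hxd
      have hxV : x ∈ V := ζ.2
      have hVz : Subgroup.zpowers x = V := by
        apply le_antisymm (Subgroup.zpowers_le.mpr hxV)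
        intro v hv
        obtain ⟨k, hk⟩ := Subgroup.mem_zpowers_iff.mp (hζ ⟨v, hv⟩)
        refine Subgroup.mem_zpowers_iff.mpr ⟨k, ?_⟩
        have := congrArg Subtype.val hk
        rwa [SubgroupClass.coe_zpow] at this
      have hordx : orderOf x = 4 := by
        rw [← Nat.card_zpowers, hVz]; exact hVcard
      have hx4 : x ^ (4:ℕ) = 1 := by rw [← hordx]; exact pow_orderOf_eq_one x
      -- u = x * x
      have huV : u ∈ V := hVle huU
      obtain ⟨k, hk⟩ := Subgroup.mem_zpowers_iff.mp (hVz ▸ huV)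
      have hk4 : ((4:ℕ):ℤ) ∣ (k + k) := by
        rw [← hordx]
        apply orderOf_dvd_iff_zpow_eq_one.mpr
        rw [zpow_add, hk]; exact hu2
      obtain ⟨m, hm⟩ : ∃ m : ℤ, k = 2 * m := by
        obtain ⟨m, hm⟩ := hk4
        exact ⟨m, by push_cast at hm; omega⟩
      have hs2 : (x * x) * (x * x) = 1 := by
        have : (x*x)*(x*x) = x ^ (4:ℕ) := by
          rw [show (4:ℕ) = 2*2 from rfl, pow_mul, pow_two, pow_two]
        rw [this, hx4]
      have hxs : u = (x * x) ^ m := by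
        rw [← hk, hm, zpow_mul]
        congr 1
        rw [zpow_two]
      have hxx : x * x = u := by
        rcases Int.even_or_odd m with ⟨t, ht⟩ | ⟨t, ht⟩
        · exfalso
          apply hu1
          rw [hxs, ht, show t + t = 2 * t from by ring, zpow_mul]
          have : (x*x) ^ (2:ℤ) = 1 := by rw [zpow_two]; exact hs2
          rw [this, one_zpow]
        · rw [hxs, ht, zpow_add, zpow_mul]
          have h2 : (x*x) ^ (2:ℤ) = 1 := by rw [zpow_two]; exact hs2
          rw [h2, one_zpow, one_mul, zpow_one]
      have haT : (QuotientGroup.mk x : G ⧸ U) ∈ T := by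
        show sqQ hgood (QuotientGroup.mk x) = u
        rw [sqQ_mk]; exact hxx
      refine ⟨⟨QuotientGroup.mk x, haT⟩, ?_⟩
      apply Subtype.ext
      show Subgroup.zpowers (QuotientGroup.mk x : G ⧸ U).out = V
      set y : G := (QuotientGroup.mk x : G ⧸ U).out with hyd
      have hyy : y * y = u := houtsq _ haT
      have hyV : y ∈ V := by
        have h1 : (QuotientGroup.mk y : G ⧸ U) = QuotientGroup.mk x :=
          QuotientGroup.out_eq' _
        have h2 : x⁻¹ * y ∈ U := by
          have := (QuotientGroup.eq (s := U)).mp h1.symm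
          exact this
        have : y = x * (x⁻¹ * y) := by group
        rw [this]
        exact V.mul_mem hxV (hVle h2)
      apply Subgroup.eq_of_le_of_card_ge (Subgroup.zpowers_le.mpr hyV)
      rw [hzcard y hyy, hVcard]
  have hoddT : Odd (Nat.card T) := by rw [hTC]; exact hodd
  -- the subgroup E of elements of square 1 in the quotient
  set E : Subgroup (G ⧸ U) :=
    { carrier := {a | a ^ 2 = 1}
      one_mem' := by simp
      mul_mem' := by
        intro a b ha hb
        simp only [Set.mem_setOf_eq] at ha hb ⊢
        rw [pow_two] at ha hb ⊢
        calc (a*b)*(a*b) = a*(b*a)*b := by group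
          _ = a*(a*b)*b := by rw [hQcomm b a]
          _ = (a*a)*(b*b) := by group
          _ = 1 := by rw [ha, hb, one_mul]
      inv_mem' := by
        intro a ha
        simp only [Set.mem_setOf_eq] at ha ⊢
        rw [pow_two] at ha ⊢
        rw [show a⁻¹ * a⁻¹ = (a*a)⁻¹ by group, ha, inv_one] } with hE
  have hEmem : ∀ a : G ⧸ U, a ∈ E ↔ a ^ 2 = 1 := fun a => Iff.rfl
  have hsqU : ∀ a : G ⧸ U, a ∈ E → sqQ hgood a ∈ U := by
    intro a ha
    induction a using QuotientGroup.induction_on with | _ x =>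
    rw [sqQ_mk]
    apply (QuotientGroup.eq_one_iff (x*x)).mp
    rw [QuotientGroup.mk_mul]
    rw [hEmem, pow_two] at ha
    exact ha
  have hTmemE : ∀ a : G ⧸ U, a ∈ T → a ∈ E := by
    intro a ha
    induction a using QuotientGroup.induction_on with | _ x =>
    have hx : x * x = u := by
      have : sqQ hgood (QuotientGroup.mk x) = u := ha
      rwa [sqQ_mk] at this
    rw [hEmem, pow_two, ← QuotientGroup.mk_mul, hx]
    exact (QuotientGroup.eq_one_iff u).mpr huU
  haveI fQ : Fintype (G ⧸ U) := Fintype.ofFinite _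
  haveI fE : Fintype ↥E := Fintype.ofFinite _
  set ε : ↥E → ZMod 2 := fun a => if sqQ hgood ↑a = u then 1 else 0 with hε
  set β : ↥E → ↥E → ZMod 2 := fun a c => if bQ hgood ↑a ↑c = u then 1 else 0 with hβ
  have e_mul : ∀ v ∈ U, ∀ w ∈ U,
      (if v * w = u then (1:ZMod 2) else 0)
        = (if v = u then (1:ZMod 2) else 0) + (if w = u then (1:ZMod 2) else 0) := by
    have h11 : (1:ZMod 2) + 1 = 0 := rfl
    intro v hv w hw
    rcases hUmem v hv with rfl | rfl <;> rcases hUmem w hw with rfl | rfl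
    · simp [h1u]
    · simp [h1u]
    · simp [h1u]
    · rw [hu2]; simp [h1u, h11]
  have hmulE : ∀ a c : ↥E, ε (a * c) = ε a + ε c + β a c := by
    intro a c
    have hsq := sqQ_mul hgood hcm (↑a) (↑c)
    have hco : ((a * c : ↥E) : G ⧸ U) = ↑a * ↑c := rfl
    simp only [hε, hβ, hco, hsq]
    have m1 := hsqU ↑a a.2
    have m2 := hsqU ↑c c.2
    have m3 := bQ_mem hgood hcm (↑c : G ⧸ U) (↑a : G ⧸ U)
    rw [e_mul _ (U.mul_mem m1 m2) _ m3, e_mul _ m1 _ m2,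
      bQ_symm hgood hcm (↑c : G ⧸ U) (↑a : G ⧸ U)]
  have hβadd : ∀ a a' c : ↥E, β (a * a') c = β a c + β a' c := by
    intro a a' c
    have hco : ((a * a' : ↥E) : G ⧸ U) = ↑a * ↑a' := rfl
    simp only [hβ, hco, bQ_add_left hgood hcm (↑a : G ⧸ U) (↑a' : G ⧸ U) (↑c : G ⧸ U)]
    exact e_mul _ (bQ_mem hgood hcm _ _) _ (bQ_mem hgood hcm _ _)
  -- counting T inside E
  have he1 : ∀ a : ↥E, ε a = 1 ↔ sqQ hgood ↑a = u := by
    intro a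
    simp only [hε]
    by_cases h : sqQ hgood ↑a = u
    · simp [h]
    · simp [h]
  have hcount : Nat.card T = (univ.filter fun a : ↥E => ε a = 1).card := by
    have hequiv : T ≃ {a : ↥E // ε a = 1} :=
      { toFun := fun a => ⟨⟨a.1, hTmemE a.1 a.2⟩, (he1 _).mpr a.2⟩
        invFun := fun a => ⟨↑a.1, (he1 _).mp a.2⟩
        left_inv := fun a => rfl
        right_inv := fun a => rfl }
    rw [Nat.card_congr hequiv, Nat.card_eq_fintype_card, Fintype.card_subtype]
  have hToddcount : Odd ((univ.filter fun a : ↥E => ε a = 1).card) := by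
    rw [← hcount]; exact hoddT
  -- card E is a power of two
  have hpQ : IsPGroup 2 (G ⧸ U) := hG.to_quotient U
  have hpE : IsPGroup 2 ↥E := hpQ.to_subgroup E
  obtain ⟨d, hd⟩ := (IsPGroup.iff_card).mp hpE
  have hdF : Fintype.card ↥E = 2 ^ d := by rw [← Nat.card_eq_fintype_card]; exact hd
  have hdle : d ≤ 2 := by
    by_contra hd3
    have h0 := quad_count ε β hmulE hβadd hdF (by omega)
    obtain ⟨t, ht⟩ := hToddcount
    rw [ht, Nat.cast_add, Nat.cast_mul, ZMod.natCast_self, zero_mul, zero_add,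
      Nat.cast_one] at h0
    exact absurd h0 one_ne_zero
  -- if card E = 2 then the quotient is cyclic
  have mkCyc : Fintype.card ↥E = 2 → IsCyclic (G ⧸ U) := by
    intro hE2
    haveI : DecidableEq (G ⧸ U) := Classical.decEq _
    apply cyclic_of_few_involutions hQcomm
    · exact fun a => IsPGroup.iff_orderOf.mp hpQ a
    · have h1 : (univ.filter fun a : G ⧸ U => a ^ 2 = 1).card
          = Fintype.card {a : G ⧸ U // a ^ 2 = 1} := (Fintype.card_subtype _).symm
      have h2 : Fintype.card {a : G ⧸ U // a ^ 2 = 1} = Fintype.card ↥E :=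
        Fintype.card_congr (Equiv.subtypeEquivRight (fun a => (hEmem a).symm))
      rw [h1, h2, hE2]
  -- decomposition of G elements from a generator of the quotient
  have hdecomp : ∀ g : G, (∀ q : G ⧸ U, q ∈ Subgroup.zpowers (QuotientGroup.mk g)) →
      ∀ x : G, ∃ (k : ℤ) (v : G), v ∈ U ∧ x = g ^ k * v := by
    intro g hg x
    obtain ⟨k, hk⟩ := Subgroup.mem_zpowers_iff.mp (hg (QuotientGroup.mk x))
    rw [← QuotientGroup.mk_zpow] at hk
    exact ⟨k, (g ^ k)⁻¹ * x, (QuotientGroup.eq (s := U)).mp hk, by group⟩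
  by_cases hab : ∀ x y : G, x * y = y * x
  · -- abelian case : G is cyclic
    left
    have hbQ1 : ∀ q r : G ⧸ U, bQ hgood q r = 1 := by
      intro q r
      induction q using QuotientGroup.induction_on with | _ x =>
      induction r using QuotientGroup.induction_on with | _ y =>
      rw [bQ_mk]
      exact commutatorElement_eq_one_iff_mul_comm.mpr (hab x y)
    have hβ0 : ∀ a c : ↥E, β a c = 0 := by
      intro a c
      simp only [hβ, hbQ1]
      exact if_neg h1u
    have hhom : ∀ a c : ↥E, ε (a * c) = ε a + ε c := by
      intro a c; rw [hmulE, hβ0, add_zero]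
    obtain ⟨t, ht⟩ := hToddcount
    rcases hom_count ε hhom with h | h
    · omega
    · rw [hdF, ht] at h
      have hd1 : d = 1 := by
        interval_cases d
        · rw [pow_zero] at h; omega
        · rfl
        · rw [show (2:ℕ)^2 = 4 from rfl] at h; omega
      have hQcyc : IsCyclic (G ⧸ U) := mkCyc (by rw [hdF, hd1, pow_one])
      obtain ⟨ζ, hζ⟩ := hQcyc.exists_generator
      obtain ⟨g, hg⟩ := QuotientGroup.mk_surjective ζ
      have hgen : ∀ q : G ⧸ U, q ∈ Subgroup.zpowers (QuotientGroup.mk g) := by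
        intro q; rw [hg]; exact hζ q
      have hTne : Nonempty ↥T := by
        obtain ⟨t2, ht2⟩ := hoddT
        exact (Nat.card_pos_iff.mp (by omega)).1
      obtain ⟨⟨a, ha⟩⟩ := hTne
      obtain ⟨k, v, hv, hxv⟩ := hdecomp g hgen a.out
      have hgu : u ∈ Subgroup.zpowers g := by
        have hx := houtsq a ha
        rw [hxv] at hx
        rw [I6 (hcent v hv) (g^k) (g^k) v, (hgood v hv).1, mul_one, ← zpow_add] at hx
        rw [← hx]
        exact Subgroup.zpow_mem _ (Subgroup.mem_zpowers g) _
      refine ⟨⟨g, fun x => ?_⟩⟩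
      obtain ⟨k', v', hv', rfl⟩ := hdecomp g hgen x
      rcases hUmem v' hv' with rfl | rfl
      · rw [mul_one]; exact Subgroup.zpow_mem _ (Subgroup.mem_zpowers g) _
      · exact Subgroup.mul_mem _ (Subgroup.zpow_mem _ (Subgroup.mem_zpowers g) _) hgu
  · -- nonabelian case : card G = 8
    right
    refine ⟨hab, ?_⟩
    have hd2 : d = 2 := by
      interval_cases d
      · -- card E = 1, contradiction with oddness
        exfalso
        haveI hsub : Subsingleton ↥E := by
          apply Fintype.card_le_one_iff_subsingleton.mp
          rw [hdF]; norm_num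
        have hε1 : ε (1 : ↥E) = 0 := by
          have hc1 : ((1 : ↥E) : G ⧸ U) = QuotientGroup.mk 1 := by
            rw [QuotientGroup.mk_one]; rfl
          simp only [hε, hc1, sqQ_mk, one_mul]
          exact if_neg h1u
        have hcnt0 : (univ.filter fun a : ↥E => ε a = 1).card = 0 := by
          rw [Finset.card_eq_zero, Finset.filter_eq_empty_iff]
          intro a _
          rw [Subsingleton.elim a 1, hε1]
          exact fun hh => one_ne_zero hh.symm
        obtain ⟨t, ht⟩ := hToddcount
        omega
      · -- card E = 2 : quotient cyclic, so G abelian, contradiction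
        exfalso
        apply hab
        have hQcyc : IsCyclic (G ⧸ U) := mkCyc (by rw [hdF, pow_one])
        obtain ⟨ζ, hζ⟩ := hQcyc.exists_generator
        obtain ⟨g, hg⟩ := QuotientGroup.mk_surjective ζ
        have hgen : ∀ q : G ⧸ U, q ∈ Subgroup.zpowers (QuotientGroup.mk g) := by
          intro q; rw [hg]; exact hζ q
        intro x y
        obtain ⟨k, v, hv, rfl⟩ := hdecomp g hgen x
        obtain ⟨l, w, hw, rfl⟩ := hdecomp g hgen y
        rw [I6 (hcent v hv) (g^k) (g^l) w, I6 (hcent w hw) (g^l) (g^k) v,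
          ← zpow_add, ← zpow_add, add_comm k l, hcent w hw v]
      · rfl
    have hE4 : Fintype.card ↥E = 4 := by rw [hdF, hd2]; rfl
    -- there exist elements pairing nontrivially
    have hvw : ∃ v w : ↥E, β v w = 1 := by
      by_contra hno
      push_neg at hno
      have hβ0 : ∀ v w : ↥E, β v w = 0 := fun v w =>
        (zmod2_cases _).resolve_right (hno v w)
      have hhom : ∀ a c : ↥E, ε (a * c) = ε a + ε c := by
        intro a c; rw [hmulE, hβ0, add_zero]
      obtain ⟨t, ht⟩ := hToddcount
      rcases hom_count ε hhom with h | h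
      · omega
      · rw [hE4, ht] at h; omega
    -- every element of the quotient has square 1
    have hsq1 : ∀ a : G ⧸ U, a ^ 2 = 1 := by
      by_contra hns
      push_neg at hns
      obtain ⟨a, ha2⟩ := hns
      obtain ⟨k, hk⟩ := IsPGroup.iff_orderOf.mp hpQ a
      have hk2 : 2 ≤ k := by
        by_contra hlt
        push_neg at hlt
        apply ha2
        apply orderOf_dvd_iff_pow_eq_one.mp
        rw [hk]
        have := pow_dvd_pow 2 (show k ≤ 1 by omega)
        rwa [pow_one] at this
      set c : G ⧸ U := a ^ (2 ^ (k - 2)) with hc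
      have hordc : orderOf c = 4 := by
        rw [hc, orderOf_pow, hk, Nat.gcd_eq_right (pow_dvd_pow 2 (by omega)),
          Nat.pow_div (by omega) (by norm_num), show k - (k-2) = 2 by omega]
      have hc2 : c ^ 2 ≠ 1 := by
        intro h
        have := orderOf_dvd_of_pow_eq_one h
        rw [hordc] at this
        exact absurd (Nat.le_of_dvd (by norm_num) this) (by norm_num)
      have hc4 : (c ^ 2) ^ 2 = 1 := by
        rw [← pow_mul, show 2*2 = 4 from rfl, ← hordc]
        exact pow_orderOf_eq_one c
      set r : G ⧸ U := c ^ 2 with hr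
      have hrE : r ∈ E := (hEmem r).mpr hc4
      have hrne : r ≠ 1 := hc2
      have hrad : ∀ q : G ⧸ U, bQ hgood r q = 1 := by
        intro q
        rw [hr, pow_two, bQ_add_left hgood hcm c c q]
        exact (hgood _ (bQ_mem hgood hcm c q)).1
      obtain ⟨v, w, hvw1⟩ := hvw
      set rr : ↥E := ⟨r, hrE⟩ with hrr
      have hβ1 : ∀ s : ↥E, β rr s = 0 := by
        intro s
        simp only [hβ, hrr]
        rw [hrad ↑s]
        exact if_neg h1u
      have hβsymm : ∀ s s' : ↥E, β s s' = β s' s := by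
        intro s s'
        simp only [hβ]
        rw [bQ_symm hgood hcm (↑s : G ⧸ U) (↑s' : G ⧸ U)]
      have hβone : ∀ s : ↥E, β 1 s = 0 := by
        intro s
        have h := hβadd 1 1 s
        rw [mul_one] at h
        rcases zmod2_cases (β 1 s) with hh | hh
        · exact hh
        · rw [hh, show (1:ZMod 2) + 1 = 0 from rfl] at h
          exact absurd h one_ne_zero
      have hβself : ∀ s : ↥E, β s s = 0 := by
        intro s
        simp only [hβ]
        rw [bQ_self hgood (↑s : G ⧸ U)]
        exact if_neg h1u
      have hβvw0 : β v w = 0 := by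
        by_cases hv1 : v = 1
        · rw [hv1]; exact hβone w
        by_cases hvr : v = rr
        · rw [hvr]; exact hβ1 w
        by_cases hw1 : w = 1
        · rw [hw1, hβsymm]; exact hβone v
        by_cases hwr : w = rr
        · rw [hwr, hβsymm]; exact hβ1 v
        by_cases hvw' : v = w
        · rw [hvw']; exact hβself w
        -- the four elements 1, rr, v, w exhaust E
        have n1 : (1 : ↥E) ≠ rr := fun h => hrne (congrArg Subtype.val h.symm)
        have n2 : (1 : ↥E) ≠ v := fun h => hv1 h.symm
        have n3 : (1 : ↥E) ≠ w := fun h => hw1 h.symm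
        have n4 : rr ≠ v := fun h => hvr h.symm
        have n5 : rr ≠ w := fun h => hwr h.symm
        have hcard4 : ({1, rr, v, w} : Finset ↥E).card = 4 := by
          rw [Finset.card_insert_of_notMem (by simp [n1, n2, n3]),
            Finset.card_insert_of_notMem (by simp [n4, n5]),
            Finset.card_insert_of_notMem (by simp [hvw']),
            Finset.card_singleton]
        have hEset : ({1, rr, v, w} : Finset ↥E) = univ :=
          Finset.eq_univ_of_card _ (hcard4.trans hE4.symm)
        have hvwE : v * w ∈ ({1, rr, v, w} : Finset ↥E) := by
          rw [hEset]; exact Finset.mem_univ _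
        simp only [Finset.mem_insert, Finset.mem_singleton] at hvwE
        rcases hvwE with h | h | h | h
        · exfalso
          apply hvw'
          have hvv : v * v = 1 := by
            apply Subtype.ext
            have hvE := v.2
            rw [hEmem, pow_two] at hvE
            exact hvE
          calc v = v * (v * w) := by rw [h, mul_one]
            _ = (v * v) * w := by group
            _ = w := by rw [hvv, one_mul]
        · have h0 := hβ1 w
          rw [← h, hβadd, hβself, add_zero] at h0
          exact h0
        · exact absurd (mul_eq_left.mp h) hw1
        · exact absurd (mul_eq_right.mp h) hv1
      rw [hβvw0] at hvw1
      exact zero_ne_one hvw1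
    -- conclude
    have hEtop : E = ⊤ := (Subgroup.eq_top_iff' E).mpr (fun a => (hEmem a).mpr (hsq1 a))
    have hQ4 : Nat.card (G ⧸ U) = 4 := by
      have h := hd
      rw [hEtop, hd2] at h
      rw [← Subgroup.card_top (G := G ⧸ U)]
      rw [h]
      rfl
    rw [Subgroup.card_eq_card_quotient_mul_card_subgroup U, hQ4, hU]
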